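/- Let H, ρ, F be as in the twist map setting, and assume additionally that all second partial derivatives of H are bounded in absolute value by some M > 0. Let u : ℝ → ℝ be C¹ with u(x + 1) = u(x), let c ∈ ℝ, and suppose the graph {(x, c + u'(x)) : x ∈ ℝ} is invariant under F, with F^q(x, c + u'(x)) = (x + p, c + u'(x)) for all x, for some integers p and q ≥ 1. Let α be the constant such that inf_{y}( u(y) + H(y, x) - c(x - y) ) = u(x) - α for all x. Then for every x₀ ∈ ℝ, the orbit x_k := π₁(F^k(x₀, c + u'(x₀))) satisfies Σ_{k=0}^{q-1} H(x_k, x_{k+1}) = c·p - q·α. -/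

import Mathlib

open Real

/-- Partial derivative of `H` in the first variable. -/
noncomputable def D1 (H : ℝ → ℝ → ℝ) (x x' : ℝ) : ℝ := deriv (fun t => H t x') x

/-- Partial derivative of `H` in the second variable. -/
noncomputable def D2 (H : ℝ → ℝ → ℝ) (x x' : ℝ) : ℝ := deriv (fun t => H x t) x'

/-- Mixed second partial derivative `∂₁₂H`. -/
noncomputable def D12 (H : ℝ → ℝ → ℝ) (x x' : ℝ) : ℝ := deriv (fun t => D1 H x t) x'

/-- Second partial derivative `∂₁₁H`. -/
noncomputable def D11 (H : ℝ → ℝ → ℝ) (x x' : ℝ) : ℝ := deriv (fun t => D1 H t x') x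

/-- Mixed second partial derivative `∂₂₁H`. -/
noncomputable def D21 (H : ℝ → ℝ → ℝ) (x x' : ℝ) : ℝ := deriv (fun t => D2 H t x') x

/-- Second partial derivative `∂₂₂H`. -/
noncomputable def D22 (H : ℝ → ℝ → ℝ) (x x' : ℝ) : ℝ := deriv (fun t => D2 H x t) x'

/-- Action of an orbit on a `(p, q)`-periodic invariant graph: with `α` the weak KAM
constant of `u` (i.e. `inf_y (u(y) + H(y, x) - c(x - y)) = u(x) - α` for all `x`), the
orbit `x_k = π₁F^k(x₀, c + u'(x₀))` satisfies `Σ_{k<q} H(x_k, x_{k+1}) = c·p - q·α`. -/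

lemma bdd_per {g : ℝ → ℝ} (hg : Continuous g) (hp : Function.Periodic g 1) :
    ∃ B, ∀ t, |g t| ≤ B := by
  obtain ⟨B, hB⟩ := (isCompact_Icc (a := (0:ℝ)) (b := 0 + 1)).exists_bound_of_continuousOn
    hg.continuousOn
  refine ⟨B, fun t => ?_⟩
  have ht : g t ∈ g '' Set.Icc 0 (0 + 1) := by
    rw [hp.image_Icc one_pos 0]; exact Set.mem_range_self t
  obtain ⟨s, hs, hst⟩ := ht
  rw [← hst]
  simpa using hB s hs

lemma exists_G {H : ℝ → ℝ → ℝ} (hH : ContDiff ℝ 2 (Function.uncurry H)) :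
    ∃ G : ℝ × ℝ → ℝ, ContDiff ℝ 1 G ∧ ∀ a b : ℝ, HasDerivAt (fun t => H t b) (G (a, b)) a := by
  refine ⟨fun p => fderiv ℝ (Function.uncurry H) p (1, 0), ?_, ?_⟩
  · exact (hH.fderiv_right (by norm_num)).clm_apply contDiff_const
  · intro a b
    have h1 : HasDerivAt (fun t : ℝ => ((t, b) : ℝ × ℝ)) (1, 0) a :=
      (hasDerivAt_id a).prodMk (hasDerivAt_const a b)
    have h2 : HasFDerivAt (Function.uncurry H) (fderiv ℝ (Function.uncurry H) (a, b)) (a, b) :=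
      (hH.differentiable (by norm_num) (a, b)).hasFDerivAt
    exact h2.comp_hasDerivAt a h1

theorem stmt15 (H : ℝ → ℝ → ℝ) (ρ M : ℝ) (F : ℝ × ℝ → ℝ × ℝ)
    (hH : ContDiff ℝ 2 (Function.uncurry H))
    (hper : ∀ x x', H (x + 1) (x' + 1) = H x x')
    (hρ : 0 < ρ) (htwist : ∀ x x', D12 H x x' ≤ -ρ)
    (hM : 0 < M)
    (hbound : ∀ x x', |D11 H x x'| ≤ M ∧ |D12 H x x'| ≤ M ∧ |D21 H x x'| ≤ M ∧
      |D22 H x x'| ≤ M)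
    (hFbij : Function.Bijective F)
    (hFdef : ∀ x r x' r', F (x, r) = (x', r') ↔ (r = -D1 H x x' ∧ r' = D2 H x x'))
    (u : ℝ → ℝ) (hu : ContDiff ℝ 1 u) (huper : ∀ x, u (x + 1) = u x) (c : ℝ)
    (hinv : Set.BijOn F {p : ℝ × ℝ | p.2 = c + deriv u p.1}
      {p : ℝ × ℝ | p.2 = c + deriv u p.1})
    (p : ℤ) (q : ℕ) (hq : 1 ≤ q)
    (hperiodic : ∀ x : ℝ, F^[q] (x, c + deriv u x) = (x + p, c + deriv u x))
    (α : ℝ) (hα : ∀ x : ℝ, (⨅ y : ℝ, (u y + H y x - c * (x - y))) = u x - α)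
    (x₀ : ℝ) (x : ℕ → ℝ) (hx : ∀ k, x k = (F^[k] (x₀, c + deriv u x₀)).1) :
    ∑ k ∈ Finset.range q, H (x k) (x (k + 1)) = c * p - q * α := by
  obtain ⟨G, hG, hGd⟩ := exists_G hH
  have hD1 : ∀ a b, D1 H a b = G (a, b) := fun a b => (hGd a b).deriv
  have hGd2 : ∀ a b : ℝ, HasDerivAt (fun t => G (a, t)) (fderiv ℝ G (a, b) (0, 1)) b := fun a b =>
    (hG.differentiable one_ne_zero (a, b)).hasFDerivAt.comp_hasDerivAt b
      ((hasDerivAt_const b a).prodMk (hasDerivAt_id b))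
  have hD1snd : ∀ a b : ℝ, HasDerivAt (fun t => D1 H a t) (D12 H a b) b := by
    intro a b
    have e : (fun t => D1 H a t) = fun t => G (a, t) := funext fun t => hD1 a t
    have h3 : D12 H a b = fderiv ℝ G (a, b) (0, 1) := by
      unfold D12; rw [e]; exact (hGd2 a b).deriv
    rw [h3, e]; exact hGd2 a b
  -- periodicity of the diagonal of D1
  have hper1 : ∀ a b : ℝ, D1 H (a + 1) (b + 1) = D1 H a b := by
    intro a b
    have e : (fun s : ℝ => H s (b + 1)) = fun s => H (s - 1) b := funext fun s => by
      rw [← hper (s - 1) b, sub_add_cancel]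
    have hf : HasDerivAt (fun t => H t b) (G (a, b)) ((a + 1) - 1) := by
      rw [add_sub_cancel_right]; exact hGd a b
    have hg : HasDerivAt (fun s : ℝ => s - 1) 1 (a + 1) := (hasDerivAt_id _).sub_const 1
    have hcomp : HasDerivAt (fun s : ℝ => H (s - 1) b) (G (a, b) * 1) (a + 1) :=
      by have h := hf.comp (a + 1) hg; exact h
    have : D1 H (a + 1) (b + 1) = G (a, b) * 1 := by
      unfold D1; rw [e]; exact hcomp.deriv
    rw [this, mul_one, hD1]
  -- monotonicity consequences of the twist
  have key1 : ∀ a s : ℝ, s ≤ a → D1 H a a + ρ * (a - s) ≤ D1 H a s := by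
    intro a s hs
    have hanti : Antitone (fun t => D1 H a t + ρ * t) := by
      apply antitone_of_deriv_nonpos
      · intro t
        have hmul : HasDerivAt (fun t : ℝ => ρ * t) ρ t := by
          simpa using (hasDerivAt_id t).const_mul ρ
        exact ((hD1snd a t).add hmul).differentiableAt
      · intro t
        have hmul : HasDerivAt (fun t : ℝ => ρ * t) ρ t := by
          simpa using (hasDerivAt_id t).const_mul ρ
        rw [((hD1snd a t).fun_add hmul).deriv]
        have := htwist a t; linarith
    have h := hanti hs
    simp only [] at h
    linarith
  have key2 : ∀ a s : ℝ, a ≤ s → D1 H a s ≤ D1 H a a - ρ * (s - a) := by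
    intro a s hs
    have hanti : Antitone (fun t => D1 H a t + ρ * t) := by
      apply antitone_of_deriv_nonpos
      · intro t
        have hmul : HasDerivAt (fun t : ℝ => ρ * t) ρ t := by
          simpa using (hasDerivAt_id t).const_mul ρ
        exact ((hD1snd a t).add hmul).differentiableAt
      · intro t
        have hmul : HasDerivAt (fun t : ℝ => ρ * t) ρ t := by
          simpa using (hasDerivAt_id t).const_mul ρ
        rw [((hD1snd a t).fun_add hmul).deriv]
        have := htwist a t; linarith
    have h := hanti hs
    simp only [] at h
    linarith
  -- bound on the diagonal of D1
  obtain ⟨B, hB⟩ : ∃ B, ∀ t, |D1 H t t| ≤ B := by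
    apply bdd_per
    · have e : (fun t : ℝ => D1 H t t) = fun t => G (t, t) := funext fun t => hD1 t t
      rw [e]
      exact hG.continuous.comp (continuous_id.prodMk continuous_id)
    · exact fun t => hper1 t t
  -- derivative of comparison functions
  have hder : ∀ (b β z : ℝ), HasDerivAt
      (fun z => H z b - H b b + β * (z - b) - ρ / 2 * (z - b) ^ 2)
      (D1 H z b + β - ρ * (z - b)) z := by
    intro b β z
    have h1 := (hGd z b).sub_const (H b b)
    have h2 : HasDerivAt (fun z : ℝ => β * (z - b)) β z := by
      simpa using ((hasDerivAt_id z).sub_const b).const_mul β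
    have h3 : HasDerivAt (fun z : ℝ => ρ / 2 * (z - b) ^ 2) (ρ * (z - b)) z := by
      have h4 : HasDerivAt (fun z : ℝ => (z - b) ^ 2) (2 * (z - b)) z := by
        simpa using ((hasDerivAt_id z).sub_const b).fun_pow 2
      have h5 := h4.const_mul (ρ / 2)
      refine h5.congr_deriv ?_
      ring
    have h6 := (h1.add h2).sub h3
    rw [hD1 z b]
    exact h6
  -- quadratic lower bound
  have hquad : ∀ b y : ℝ, H b b - B * |y - b| + ρ / 2 * (y - b) ^ 2 ≤ H y b := by
    intro b y
    rcases le_total b y with hby | hyb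
    · have hmono : MonotoneOn
          (fun z => H z b - H b b + B * (z - b) - ρ / 2 * (z - b) ^ 2) (Set.Ici b) := by
        apply monotoneOn_of_deriv_nonneg (convex_Ici b)
        · exact fun z _ => (hder b B z).continuousAt.continuousWithinAt
        · exact fun z _ => (hder b B z).differentiableAt.differentiableWithinAt
        · intro z hz
          rw [(hder b B z).deriv]
          rw [interior_Ici] at hz
          have h1 := key1 z b (le_of_lt hz)
          have h2 := abs_le.mp (hB z)
          linarith [h2.1, h2.2]
      have h0 : (0:ℝ) ≤ H y b - H b b + B * (y - b) - ρ / 2 * (y - b) ^ 2 := by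
        have := hmono Set.self_mem_Ici (show y ∈ Set.Ici b from hby) hby
        simpa using this
      rw [abs_of_nonneg (sub_nonneg.2 hby)]
      linarith
    · have hanti : AntitoneOn
          (fun z => H z b - H b b + (-B) * (z - b) - ρ / 2 * (z - b) ^ 2) (Set.Iic b) := by
        apply antitoneOn_of_deriv_nonpos (convex_Iic b)
        · exact fun z _ => (hder b (-B) z).continuousAt.continuousWithinAt
        · exact fun z _ => (hder b (-B) z).differentiableAt.differentiableWithinAt
        · intro z hz
          rw [(hder b (-B) z).deriv]
          rw [interior_Iic] at hz
          have h1 := key2 z b (le_of_lt hz)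
          have h2 := abs_le.mp (hB z)
          linarith [h2.1, h2.2]
      have h0 : (0:ℝ) ≤ H y b - H b b + (-B) * (y - b) - ρ / 2 * (y - b) ^ 2 := by
        have := hanti (show y ∈ Set.Iic b from hyb) Set.self_mem_Iic hyb
        simpa using this
      rw [abs_of_nonpos (sub_nonpos.2 hyb)]
      linarith
  obtain ⟨Cu, hCu⟩ : ∃ Cu, ∀ t, |u t| ≤ Cu := bdd_per hu.continuous (fun t => huper t)
  have hcalib : ∀ a b : ℝ, F (a, c + deriv u a) = (b, c + deriv u b) →
      u a + H a b - c * (b - a) = u b - α := by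
    intro a b hab
    -- coercivity of the Lax–Oleinik functional at b
    have hlow : ∀ y : ℝ, ρ / 2 * |y - b| ^ 2 - (B + |c|) * |y - b| + (H b b - Cu) ≤
        u y + H y b - c * (b - y) := by
      intro y
      have h1 := hquad b y
      have h2 : -Cu ≤ u y := (abs_le.mp (hCu y)).1
      have h3 : -(|c| * |y - b|) ≤ c * (y - b) := by rw [← abs_mul]; exact neg_abs_le _
      rw [sq_abs]
      nlinarith
    have hcont : Continuous (fun y : ℝ => u y + H y b - c * (b - y)) := by
      have h1 : Continuous (fun y : ℝ => H y b) :=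
        hH.continuous.comp (continuous_id.prodMk continuous_const)
      exact (hu.continuous.add h1).sub (continuous_const.mul (continuous_const.sub continuous_id))
    have htend : Filter.Tendsto (fun y : ℝ => u y + H y b - c * (b - y))
        (Filter.cocompact ℝ) Filter.atTop := by
      have hq : Filter.Tendsto
          (fun d : ℝ => ρ / 2 * d ^ 2 - (B + |c|) * d + (H b b - Cu))
          Filter.atTop Filter.atTop := by
        apply Filter.tendsto_atTop_add_const_right
        have h1 : Filter.Tendsto (fun d : ℝ => d * (ρ / 2 * d - (B + |c|)))
            Filter.atTop Filter.atTop := by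
          apply Filter.Tendsto.atTop_mul_atTop₀ Filter.tendsto_id
          apply Filter.tendsto_atTop_add_const_right
          exact Filter.Tendsto.const_mul_atTop (by linarith) Filter.tendsto_id
        exact h1.congr (fun d => by ring)
      have habs : Filter.Tendsto (fun y : ℝ => |y - b|) (Filter.cocompact ℝ) Filter.atTop := by
        rw [cocompact_eq_atBot_atTop, Filter.tendsto_sup]
        constructor
        · have h1 : Filter.Tendsto (fun y : ℝ => y - b) Filter.atBot Filter.atBot :=
            Filter.tendsto_atBot_add_const_right _ (-b) Filter.tendsto_id |>.congr
              (fun y => by simp only [id_eq]; ring)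
          exact Filter.tendsto_abs_atBot_atTop.comp h1
        · have h1 : Filter.Tendsto (fun y : ℝ => y - b) Filter.atTop Filter.atTop :=
            Filter.tendsto_atTop_add_const_right _ (-b) Filter.tendsto_id |>.congr
              (fun y => by simp only [id_eq]; ring)
          exact Filter.tendsto_abs_atTop_atTop.comp h1
      exact Filter.tendsto_atTop_mono hlow (hq.comp habs)
    obtain ⟨ym, hym⟩ := hcont.exists_forall_le htend
    -- the minimum value is u b - α
    have e1 : u ym + H ym b - c * (b - ym) ≤ u b - α := by
      rw [← hα b]; exact le_ciInf hym
    have e2 : u b - α ≤ u ym + H ym b - c * (b - ym) := by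
      rw [← hα b]
      exact ciInf_le ⟨u ym + H ym b - c * (b - ym), by rintro z ⟨y, rfl⟩; exact hym y⟩ ym
    -- first-order condition at the minimum
    have hloc : IsLocalMin (fun y => u y + H y b - c * (b - y)) ym :=
      Filter.Eventually.of_forall fun y => hym y
    have hφd : HasDerivAt (fun y => u y + H y b - c * (b - y))
        (deriv u ym + G (ym, b) + c) ym := by
      have h1 := (hu.differentiable one_ne_zero ym).hasDerivAt
      have h2 : HasDerivAt (fun y : ℝ => c * (b - y)) (-c) ym := by
        simpa using ((hasDerivAt_id ym).const_sub b).const_mul c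
      have h3 := (h1.fun_add (hGd ym b)).fun_sub h2
      refine h3.congr_deriv ?_
      ring
    have hcrit : deriv u ym + G (ym, b) + c = 0 := by
      rw [← hφd.deriv]; exact hloc.deriv_eq_zero
    -- identify the image of the minimizer under F
    have hstrict : StrictAnti (fun s => D1 H ym s) := by
      apply strictAnti_of_deriv_neg
      intro s
      rw [(hD1snd ym s).deriv]
      have := htwist ym s; linarith
    set z := F (ym, c + deriv u ym) with hzdef
    obtain ⟨hz1, hz2⟩ := (hFdef ym (c + deriv u ym) z.1 z.2).mp (by rw [← hzdef])
    have hzb : z.1 = b := by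
      apply hstrict.injective
      show D1 H ym z.1 = D1 H ym b
      rw [hD1 ym b]
      have : c + deriv u ym = -G (ym, b) := by linarith
      rw [this] at hz1
      linarith [hz1]
    have hmem : (ym, c + deriv u ym) ∈ {p : ℝ × ℝ | p.2 = c + deriv u p.1} := rfl
    have hzmem := hinv.mapsTo hmem
    have hzeq : z = (b, c + deriv u b) := by
      have h2 : z.2 = c + deriv u z.1 := hzmem
      exact Prod.ext hzb (by rw [h2, hzb])
    have hya : ym = a := by
      have : F (ym, c + deriv u ym) = F (a, c + deriv u a) := by
        rw [← hzdef, hzeq, hab]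
      have h := hFbij.injective this
      exact congrArg Prod.fst h
    rw [← hya]
    linarith
  -- the orbit stays on the invariant graph
  have horb : ∀ k, F^[k] (x₀, c + deriv u x₀) = (x k, c + deriv u (x k)) := by
    intro k
    induction k with
    | zero =>
      have h0 : x 0 = x₀ := by rw [hx 0, Function.iterate_zero_apply]
      rw [h0]
      simp
    | succ k ih =>
      have hmem : ((x k, c + deriv u (x k)) : ℝ × ℝ) ∈ {p : ℝ × ℝ | p.2 = c + deriv u p.1} :=
        rfl
      have h2 : (F (x k, c + deriv u (x k))).2
          = c + deriv u (F (x k, c + deriv u (x k))).1 := hinv.mapsTo hmem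
      have h1 : x (k + 1) = (F (x k, c + deriv u (x k))).1 := by
        rw [hx (k + 1), Function.iterate_succ_apply', ih]
      rw [Function.iterate_succ_apply', ih]
      exact Prod.ext h1.symm (by rw [h2, ← h1])
  have hstep : ∀ k, F (x k, c + deriv u (x k)) = (x (k + 1), c + deriv u (x (k + 1))) := by
    intro k
    rw [← horb k]
    have h := horb (k + 1)
    rw [Function.iterate_succ_apply'] at h
    exact h
  have hHk : ∀ k, H (x k) (x (k + 1))
      = (u (x (k + 1)) + c * x (k + 1)) - (u (x k) + c * x k) - α := by
    intro k
    have := hcalib (x k) (x (k + 1)) (hstep k)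
    linarith
  have hx0 : x 0 = x₀ := by rw [hx 0, Function.iterate_zero_apply]
  have hxq : x q = x₀ + p := by rw [hx q, hperiodic x₀]
  have hup : u (x₀ + p) = u x₀ := by
    have hp1 : Function.Periodic u 1 := fun t => huper t
    have := (hp1.int_mul p) x₀
    simpa using this
  calc ∑ k ∈ Finset.range q, H (x k) (x (k + 1))
      = ∑ k ∈ Finset.range q,
          ((u (x (k + 1)) + c * x (k + 1)) - (u (x k) + c * x k) - α) :=
        Finset.sum_congr rfl fun k _ => hHk k
    _ = ((u (x q) + c * x q) - (u (x 0) + c * x 0)) - q * α := by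
        rw [Finset.sum_sub_distrib]
        have e := Finset.sum_range_sub (fun k => u (x k) + c * x k) q
        rw [e, Finset.sum_const, Finset.card_range, nsmul_eq_mul]
    _ = c * p - q * α := by
        rw [hxq, hx0, hup]
        ring
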